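/- arXiv:2204.01198 — 2 statements merged into one kernel-verified Lean document; each statement's English description precedes it below -/
import Mathlib

section
/- With F, Σ_h, σ², Σ, A₁, B₁, B₂ as above (Σ_h Hermitian positive semidefinite, σ² > 0), define D₁ = A₁^{1/2} Σ_h A₁^{1/2} + σ² I_M and D₂ = σ² I_M. Then Σ = B₁ D₁ B₁^H + B₂ D₂ B₂^H. -/
open Matrix
open scoped ComplexOrder

/-- The block column matrix `[I_M; F] ∈ ℂ^{2M×M}`. -/
def stackIdF {M : ℕ} (F : Matrix (Fin M) (Fin M) ℂ) :
    Matrix (Fin M ⊕ Fin M) (Fin M) ℂ :=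
  Matrix.of (Sum.elim (fun i j => (1 : Matrix (Fin M) (Fin M) ℂ) i j) (fun i j => F i j))

/-- The block column matrix `[-Fᴴ; I_M] ∈ ℂ^{2M×M}`. -/
def stackNegFH {M : ℕ} (F : Matrix (Fin M) (Fin M) ℂ) :
    Matrix (Fin M ⊕ Fin M) (Fin M) ℂ :=
  Matrix.of (Sum.elim (fun i j => (-Fᴴ) i j) (fun i j => (1 : Matrix (Fin M) (Fin M) ℂ) i j))

/-- The positive semidefinite square root of a positive semidefinite matrix
(the definition `Matrix.PosSemidef.sqrt` of the older Mathlib, since removed). -/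
noncomputable def Matrix.PosSemidef.sqrt {n 𝕜 : Type*} [Fintype n] [RCLike 𝕜] [DecidableEq n]
    {A : Matrix n n 𝕜} (hA : A.PosSemidef) : Matrix n n 𝕜 :=
  (hA.1.eigenvectorUnitary : Matrix n n 𝕜) *
    diagonal (fun i => ((Real.sqrt (hA.1.eigenvalues i) : ℝ) : 𝕜)) *
    (star hA.1.eigenvectorUnitary : Matrix n n 𝕜)

lemma Matrix.PosSemidef.sqrt_mul_self {n 𝕜 : Type*} [Fintype n] [RCLike 𝕜] [DecidableEq n]
    {A : Matrix n n 𝕜} (hA : A.PosSemidef) : hA.sqrt * hA.sqrt = A := by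
  have hs := hA.1.spectral_theorem
  rw [Unitary.conjStarAlgAut_apply] at hs
  have hU : (star hA.1.eigenvectorUnitary : Matrix n n 𝕜) * (hA.1.eigenvectorUnitary : Matrix n n 𝕜) = 1 :=
    Unitary.coe_star_mul_self _
  have hD : diagonal (fun i => ((Real.sqrt (hA.1.eigenvalues i) : ℝ) : 𝕜)) *
      diagonal (fun i => ((Real.sqrt (hA.1.eigenvalues i) : ℝ) : 𝕜)) =
      diagonal (RCLike.ofReal ∘ hA.1.eigenvalues) := by
    rw [diagonal_mul_diagonal]
    congr 1; funext i
    simp only [Function.comp_apply, ← RCLike.ofReal_mul, Real.mul_self_sqrt (hA.eigenvalues_nonneg i)]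
  conv_rhs => rw [hs]
  unfold Matrix.PosSemidef.sqrt
  calc _ = (hA.1.eigenvectorUnitary : Matrix n n 𝕜) * diagonal (fun i => ((Real.sqrt (hA.1.eigenvalues i) : ℝ) : 𝕜)) *
      ((star hA.1.eigenvectorUnitary : Matrix n n 𝕜) * (hA.1.eigenvectorUnitary : Matrix n n 𝕜)) *
      diagonal (fun i => ((Real.sqrt (hA.1.eigenvalues i) : ℝ) : 𝕜)) *
      (star hA.1.eigenvectorUnitary : Matrix n n 𝕜) := by simp only [Matrix.mul_assoc]
    _ = _ := by rw [hU, Matrix.mul_one, Matrix.mul_assoc _ (diagonal _) (diagonal _), hD]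

lemma Matrix.PosSemidef.posSemidef_sqrt {n 𝕜 : Type*} [Fintype n] [RCLike 𝕜] [DecidableEq n]
    {A : Matrix n n 𝕜} (hA : A.PosSemidef) : hA.sqrt.PosSemidef := by
  unfold Matrix.PosSemidef.sqrt
  have hd : (diagonal (fun i => ((Real.sqrt (hA.1.eigenvalues i) : ℝ) : 𝕜))).PosSemidef :=
    posSemidef_diagonal_iff.2 (fun i => by simpa using Real.sqrt_nonneg _)
  have := hd.mul_mul_conjTranspose_same (hA.1.eigenvectorUnitary : Matrix n n 𝕜)
  rwa [← Matrix.star_eq_conjTranspose] at this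

lemma stackIdF_eq {M : ℕ} (F : Matrix (Fin M) (Fin M) ℂ) :
    stackIdF F = fromRows 1 F := rfl

lemma stackNegFH_eq {M : ℕ} (F : Matrix (Fin M) (Fin M) ℂ) :
    stackNegFH F = fromRows (-Fᴴ) 1 := rfl

lemma aux_resolution {M : ℕ} (F : Matrix (Fin M) (Fin M) ℂ)
    (h1 : IsUnit (Fᴴ * F + 1)) (h2 : IsUnit (F * Fᴴ + 1)) :
    stackIdF F * (Fᴴ * F + 1)⁻¹ * (stackIdF F)ᴴ
      + stackNegFH F * (F * Fᴴ + 1)⁻¹ * (stackNegFH F)ᴴ = 1 := by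
  set A1 := Fᴴ * F + 1 with hA1def
  set A2 := F * Fᴴ + 1 with hA2def
  have h1d : IsUnit A1.det := (Matrix.isUnit_iff_isUnit_det _).1 h1
  have h2d : IsUnit A2.det := (Matrix.isUnit_iff_isUnit_det _).1 h2
  have hinv1 : A1 * A1⁻¹ = 1 := Matrix.mul_nonsing_inv _ h1d
  have hinv1' : A1⁻¹ * A1 = 1 := Matrix.nonsing_inv_mul _ h1d
  have hinv2 : A2 * A2⁻¹ = 1 := Matrix.mul_nonsing_inv _ h2d
  have hinv2' : A2⁻¹ * A2 = 1 := Matrix.nonsing_inv_mul _ h2d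
  have hcomm : F * A1 = A2 * F := by
    rw [hA1def, hA2def]; noncomm_ring
  have hkey : F * A1⁻¹ = A2⁻¹ * F := by
    calc F * A1⁻¹ = A2⁻¹ * (A2 * F) * A1⁻¹ := by rw [← Matrix.mul_assoc, hinv2', Matrix.one_mul]
    _ = A2⁻¹ * (F * A1) * A1⁻¹ := by rw [hcomm]
    _ = A2⁻¹ * F * (A1 * A1⁻¹) := by noncomm_ring
    _ = A2⁻¹ * F := by rw [hinv1, Matrix.mul_one]
  have hkey' : A1⁻¹ * Fᴴ = Fᴴ * A2⁻¹ := by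
    have := congrArg Matrix.conjTranspose hkey
    simp only [Matrix.conjTranspose_mul, Matrix.conjTranspose_nonsing_inv, hA1def, hA2def,
      Matrix.conjTranspose_add, Matrix.conjTranspose_one, Matrix.conjTranspose_conjTranspose] at this
    exact this
  rw [stackIdF_eq, stackNegFH_eq]
  simp only [Matrix.conjTranspose_fromRows_eq_fromCols_conjTranspose, Matrix.fromRows_mul,
    Matrix.mul_fromCols, Matrix.fromRows_fromCols_eq_fromBlocks, Matrix.fromCols_fromRows_eq_fromBlocks,
    ← Matrix.fromBlocks_one]
  rw [Matrix.fromBlocks_add, Matrix.fromBlocks_inj]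
  refine ⟨?_, ?_, ?_, ?_⟩
  · -- top-left
    have hFF : Fᴴ * F = A1 - 1 := by rw [hA1def, add_sub_cancel_right]
    have key : Fᴴ * (A2⁻¹ * F) = 1 - A1⁻¹ := by
      rw [← Matrix.mul_assoc, ← hkey', Matrix.mul_assoc, hFF, Matrix.mul_sub, hinv1',
        Matrix.mul_one]
    simp only [Matrix.one_mul, Matrix.conjTranspose_one, Matrix.mul_one,
      Matrix.conjTranspose_neg, Matrix.conjTranspose_conjTranspose, Matrix.neg_mul,
      Matrix.mul_neg, neg_neg, Matrix.mul_assoc]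
    rw [key]; abel
  · -- top-right
    simp only [Matrix.one_mul, Matrix.conjTranspose_one, Matrix.mul_one,
      Matrix.conjTranspose_conjTranspose, Matrix.neg_mul]
    rw [hkey']; abel
  · -- bottom-left
    simp only [Matrix.conjTranspose_one, Matrix.mul_one, Matrix.conjTranspose_neg,
      Matrix.conjTranspose_conjTranspose, Matrix.mul_neg, Matrix.one_mul]
    rw [hkey]; abel
  · -- bottom-right
    have hFF : F * Fᴴ = A2 - 1 := by rw [hA2def, add_sub_cancel_right]
    simp only [Matrix.conjTranspose_one, Matrix.mul_one, Matrix.one_mul]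
    rw [hkey, Matrix.mul_assoc, hFF, Matrix.mul_sub, hinv2', Matrix.mul_one]
    abel

/-- With `Σ = [I;F] Σ_h [I Fᴴ] + σ² I`, `D₁ = A₁^{1/2} Σ_h A₁^{1/2} + σ² I`, `D₂ = σ² I`,
`B₁ = [I;F] A₁^{-1/2}`, `B₂ = [-Fᴴ;I] A₂^{-1/2}`, one has `Σ = B₁ D₁ B₁ᴴ + B₂ D₂ B₂ᴴ`. -/
theorem block_eigendecomposition {M : ℕ} (F Sh : Matrix (Fin M) (Fin M) ℂ)
    (hSh : Sh.PosSemidef) (σ2 : ℝ) (hσ : 0 < σ2)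
    (hA1 : (Fᴴ * F + 1).PosSemidef) (hA2 : (F * Fᴴ + 1).PosSemidef) :
    stackIdF F * Sh * (stackIdF F)ᴴ + (σ2 : ℂ) • 1
      = (stackIdF F * hA1.sqrt⁻¹) * (hA1.sqrt * Sh * hA1.sqrt + (σ2 : ℂ) • (1 : Matrix (Fin M) (Fin M) ℂ)) *
          (stackIdF F * hA1.sqrt⁻¹)ᴴ
        + (stackNegFH F * hA2.sqrt⁻¹) * ((σ2 : ℂ) • (1 : Matrix (Fin M) (Fin M) ℂ)) * (stackNegFH F * hA2.sqrt⁻¹)ᴴ := by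
  have hpd1 : (Fᴴ * F + 1).PosDef :=
    Matrix.PosDef.posSemidef_add (Matrix.posSemidef_conjTranspose_mul_self F) Matrix.PosDef.one
  have hpd2 : (F * Fᴴ + 1).PosDef :=
    Matrix.PosDef.posSemidef_add (Matrix.posSemidef_self_mul_conjTranspose F) Matrix.PosDef.one
  have hdet1 : IsUnit hA1.sqrt.det := by
    have h := hA1.sqrt_mul_self
    have hu : IsUnit (Fᴴ * F + 1).det := hpd1.isUnit.map Matrix.detMonoidHom
    rw [← h, Matrix.det_mul] at hu
    exact isUnit_of_mul_isUnit_left hu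
  have hdet2 : IsUnit hA2.sqrt.det := by
    have h := hA2.sqrt_mul_self
    have hu : IsUnit (F * Fᴴ + 1).det := hpd2.isUnit.map Matrix.detMonoidHom
    rw [← h, Matrix.det_mul] at hu
    exact isUnit_of_mul_isUnit_left hu
  have hH1 : hA1.sqrt⁻¹ᴴ = hA1.sqrt⁻¹ := by
    rw [Matrix.conjTranspose_nonsing_inv, hA1.posSemidef_sqrt.isHermitian.eq]
  have hH2 : hA2.sqrt⁻¹ᴴ = hA2.sqrt⁻¹ := by
    rw [Matrix.conjTranspose_nonsing_inv, hA2.posSemidef_sqrt.isHermitian.eq]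
  have e1 : hA1.sqrt⁻¹ * hA1.sqrt = 1 := Matrix.nonsing_inv_mul _ hdet1
  have e1' : hA1.sqrt * hA1.sqrt⁻¹ = 1 := Matrix.mul_nonsing_inv _ hdet1
  have t1 : hA1.sqrt⁻¹ * hA1.sqrt⁻¹ = (Fᴴ * F + 1)⁻¹ := by
    rw [← Matrix.mul_inv_rev, hA1.sqrt_mul_self]
  have t2 : hA2.sqrt⁻¹ * hA2.sqrt⁻¹ = (F * Fᴴ + 1)⁻¹ := by
    rw [← Matrix.mul_inv_rev, hA2.sqrt_mul_self]
  have mid : hA1.sqrt⁻¹ * (hA1.sqrt * Sh * hA1.sqrt + (σ2 : ℂ) • 1) * hA1.sqrt⁻¹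
      = Sh + (σ2 : ℂ) • (Fᴴ * F + 1)⁻¹ := by
    rw [Matrix.mul_add, Matrix.add_mul]
    congr 1
    · calc hA1.sqrt⁻¹ * (hA1.sqrt * Sh * hA1.sqrt) * hA1.sqrt⁻¹
          = (hA1.sqrt⁻¹ * hA1.sqrt) * (Sh * (hA1.sqrt * hA1.sqrt⁻¹)) := by
            simp only [Matrix.mul_assoc]
        _ = Sh := by rw [e1, e1', Matrix.one_mul, Matrix.mul_one]
    · rw [Matrix.mul_smul, Matrix.mul_one, Matrix.smul_mul, t1]
  have key := aux_resolution F hpd1.isUnit hpd2.isUnit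
  symm
  calc _ = stackIdF F * (hA1.sqrt⁻¹ * (hA1.sqrt * Sh * hA1.sqrt + (σ2 : ℂ) • 1) * hA1.sqrt⁻¹) *
          (stackIdF F)ᴴ
        + stackNegFH F * (hA2.sqrt⁻¹ * ((σ2 : ℂ) • 1) * hA2.sqrt⁻¹) * (stackNegFH F)ᴴ := by
        rw [Matrix.conjTranspose_mul, Matrix.conjTranspose_mul, hH1, hH2]
        simp only [Matrix.mul_assoc]
    _ = stackIdF F * (Sh + (σ2 : ℂ) • (Fᴴ * F + 1)⁻¹) * (stackIdF F)ᴴ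
        + stackNegFH F * ((σ2 : ℂ) • (F * Fᴴ + 1)⁻¹) * (stackNegFH F)ᴴ := by
        rw [mid, Matrix.mul_smul, Matrix.mul_one, Matrix.smul_mul, t2]
    _ = stackIdF F * Sh * (stackIdF F)ᴴ
        + (σ2 : ℂ) • (stackIdF F * (Fᴴ * F + 1)⁻¹ * (stackIdF F)ᴴ
            + stackNegFH F * (F * Fᴴ + 1)⁻¹ * (stackNegFH F)ᴴ) := by
        rw [Matrix.mul_add, Matrix.add_mul, smul_add]
        simp only [Matrix.mul_smul, Matrix.smul_mul]
        abel
    _ = stackIdF F * Sh * (stackIdF F)ᴴ + (σ2 : ℂ) • 1 := by rw [key]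
end

section
/- Let Σ ∈ ℂ^{2M×2M} be the matrix Σ = [I_M; F] Σ_h [I_M F^H] + σ² I_{2M} with F ∈ ℂ^{M×M}, Σ_h Hermitian positive semidefinite, σ² > 0. Then Σ has exactly M eigenvalues equal to σ² (counted with multiplicity) if Σ_h and A₁ = F^H F + I_M are such that A₁^{1/2} Σ_h A₁^{1/2} is positive definite, and all remaining M eigenvalues are strictly greater than σ². -/
open Matrix
open scoped ComplexOrder

/-- If `A₁^{1/2} Σ_h A₁^{1/2}` is positive definite (`A₁ = Fᴴ F + I`), then
`Σ = [I;F] Σ_h [I Fᴴ] + σ² I_{2M}` has exactly `M` eigenvalues equal to `σ²` (with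
multiplicity) and the remaining `M` eigenvalues strictly greater than `σ²`. -/
theorem exactly_M_eigenvalues_equal_sigma_sq {M : ℕ} (F Sh : Matrix (Fin M) (Fin M) ℂ)
    (hSh : Sh.PosSemidef) (σ2 : ℝ) (hσ : 0 < σ2)
    (hA1 : (Fᴴ * F + 1).PosSemidef)
    (hpd : ((hA1.1.eigenvectorUnitary.1 * diagonal ((fun x : ℝ => (x : ℂ)) ∘ (Real.sqrt ·) ∘ hA1.1.eigenvalues) *
        (star hA1.1.eigenvectorUnitary : Matrix (Fin M) (Fin M) ℂ)) * Sh *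
      (hA1.1.eigenvectorUnitary.1 * diagonal ((fun x : ℝ => (x : ℂ)) ∘ (Real.sqrt ·) ∘ hA1.1.eigenvalues) *
        (star hA1.1.eigenvectorUnitary : Matrix (Fin M) (Fin M) ℂ))).PosDef) :
    ∃ hS : (stackIdF F * Sh * (stackIdF F)ᴴ
        + (σ2 : ℂ) • (1 : Matrix (Fin M ⊕ Fin M) (Fin M ⊕ Fin M) ℂ)).IsHermitian,
      (Finset.univ.filter (fun i => hS.eigenvalues i = σ2)).card = M ∧
      ∀ i, hS.eigenvalues i = σ2 ∨ σ2 < hS.eigenvalues i := by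
  classical
  have hBrow : stackIdF F = Matrix.fromRows 1 F := rfl
  set B : Matrix (Fin M ⊕ Fin M) (Fin M) ℂ := stackIdF F with hBdef
  have hBtB : Bᴴ * B = Fᴴ * F + 1 := by
    rw [hBrow, conjTranspose_fromRows_eq_fromCols_conjTranspose,
      fromCols_mul_fromRows, conjTranspose_one, one_mul, add_comm]
  set P : Matrix (Fin M ⊕ Fin M) (Fin M ⊕ Fin M) ℂ := B * Sh * Bᴴ with hPdef
  have hPsd : P.PosSemidef := hSh.mul_mul_conjTranspose_same B
  have hermS : (P + (σ2 : ℂ) • (1 : Matrix (Fin M ⊕ Fin M) (Fin M ⊕ Fin M) ℂ)).IsHermitian := by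
    apply hPsd.isHermitian.add
    ext i j
    rcases eq_or_ne i j with rfl | h
    · simp
    · simp [Matrix.one_apply, h, Ne.symm h]
  -- determinant facts
  have hdet1 := hpd.det_pos.ne'
  have hShdet : Sh.det ≠ 0 := by
    intro h
    exact hdet1 (by simp [Matrix.det_mul, h])
  open scoped MatrixOrder in
  have hsqdet : (CFC.sqrt Sh).det ≠ 0 := by
    intro h
    exact hShdet (by rw [← CFC.sqrt_mul_sqrt_self Sh hSh.nonneg, Matrix.det_mul, h, zero_mul])
  have hA1pd : (Fᴴ * F + 1).PosDef :=
    Matrix.PosDef.posSemidef_add (Matrix.posSemidef_conjTranspose_mul_self F) Matrix.PosDef.one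
  have hrankB : B.rank = M := by
    rw [← Matrix.rank_conjTranspose_mul_self, hBtB,
      Matrix.rank_of_isUnit _ hA1pd.isUnit, Fintype.card_fin]
  open scoped MatrixOrder in
  have hrankP : P.rank = M := by
    have hP2 : P = (B * CFC.sqrt Sh) * (B * CFC.sqrt Sh)ᴴ := by
      have h' : (B * CFC.sqrt Sh) * (B * CFC.sqrt Sh)ᴴ = B * (CFC.sqrt Sh * CFC.sqrt Sh) * Bᴴ := by
        rw [Matrix.conjTranspose_mul, (CFC.sqrt_nonneg Sh).posSemidef.isHermitian.eq]
        simp only [Matrix.mul_assoc]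
      rw [h', CFC.sqrt_mul_sqrt_self Sh hSh.nonneg]
    rw [hP2, Matrix.rank_self_mul_conjTranspose,
      Matrix.rank_mul_eq_left_of_isUnit_det _ _ (isUnit_iff_ne_zero.mpr hsqdet), hrankB]
  -- spectral decomposition of `P + σ2 • 1`
  set U : Matrix (Fin M ⊕ Fin M) (Fin M ⊕ Fin M) ℂ := (hermS.eigenvectorUnitary : Matrix (Fin M ⊕ Fin M) (Fin M ⊕ Fin M) ℂ) with hU
  have hUU : U * star U = 1 := Matrix.mem_unitaryGroup_iff.mp hermS.eigenvectorUnitary.2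
  have hUU' : star U * U = 1 := Matrix.mem_unitaryGroup_iff'.mp hermS.eigenvectorUnitary.2
  have hdetU : IsUnit U.det :=
    IsUnit.of_mul_eq_one _ (by rw [← Matrix.det_mul, hUU, Matrix.det_one])
  have hdetsU : IsUnit (star U).det :=
    IsUnit.of_mul_eq_one _ (by rw [← Matrix.det_mul, hUU', Matrix.det_one])
  set d : (Fin M ⊕ Fin M) → ℂ := fun i => (hermS.eigenvalues i : ℂ) - (σ2 : ℂ) with hd
  have hKey : P = U * Matrix.diagonal d * star U := by
    have h1 : P + (σ2 : ℂ) • (1 : Matrix (Fin M ⊕ Fin M) (Fin M ⊕ Fin M) ℂ)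
        = U * Matrix.diagonal (RCLike.ofReal ∘ hermS.eigenvalues) * star U :=
      hermS.spectral_theorem
    have h2 : Matrix.diagonal (RCLike.ofReal ∘ hermS.eigenvalues)
        = Matrix.diagonal d + (σ2 : ℂ) • (1 : Matrix (Fin M ⊕ Fin M) (Fin M ⊕ Fin M) ℂ) := by
      ext i j
      rcases eq_or_ne i j with rfl | h
      · simp [hd, Matrix.diagonal_apply, Matrix.one_apply]
      · simp [hd, Matrix.diagonal_apply, Matrix.one_apply, h]
    rw [h2, Matrix.mul_add, Matrix.add_mul, Matrix.mul_smul, Matrix.smul_mul,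
      Matrix.mul_one, hUU] at h1
    exact add_right_cancel h1
  have hD : star U * P * U = Matrix.diagonal d := by
    rw [hKey]
    simp only [Matrix.mul_assoc, hUU', Matrix.mul_one]
    rw [← Matrix.mul_assoc, hUU', Matrix.one_mul]
  have hDpsd : (Matrix.diagonal d).PosSemidef := by
    have := hPsd.conjTranspose_mul_mul_same U
    rwa [← Matrix.star_eq_conjTranspose, hD] at this
  have hle : ∀ i, σ2 ≤ hermS.eigenvalues i := by
    intro i
    have h0 : (0 : ℂ) ≤ d i := Matrix.posSemidef_diagonal_iff.mp hDpsd i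
    have : (σ2 : ℂ) ≤ (hermS.eigenvalues i : ℂ) := by
      rwa [hd, sub_nonneg] at h0
    exact Complex.real_le_real.mp this
  have hrankD : P.rank = Fintype.card {i // d i ≠ 0} := by
    rw [hKey, Matrix.rank_mul_eq_left_of_isUnit_det _ _ hdetsU,
      Matrix.rank_mul_eq_right_of_isUnit_det _ _ hdetU, Matrix.rank_diagonal]
  have hiff : ∀ i, d i ≠ 0 ↔ hermS.eigenvalues i ≠ σ2 := by
    intro i
    simp [hd, sub_ne_zero]
  have hcard_ne : (Finset.univ.filter (fun i => hermS.eigenvalues i ≠ σ2)).card = M := by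
    have h1 : Fintype.card {i // d i ≠ 0}
        = (Finset.univ.filter (fun i => hermS.eigenvalues i ≠ σ2)).card := by
      rw [Fintype.card_subtype]
      congr 1
      apply Finset.filter_congr
      intro i _
      simpa using hiff i
    omega
  have hcard_total : (Finset.univ.filter (fun i => hermS.eigenvalues i = σ2)).card
      + (Finset.univ.filter (fun i => hermS.eigenvalues i ≠ σ2)).card = M + M := by
    rw [Finset.card_filter_add_card_filter_not, Finset.card_univ]
    simp
  refine ⟨hermS, by omega, ?_⟩
  intro i
  rcases eq_or_lt_of_le (hle i) with h | h
  · exact Or.inl h.symm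
  · exact Or.inr h
end
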